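/- Let κ be a probability measure on {1,…,n}, F a finite set with e ∈ F, d ∈ ℕ, and σ : F → Sym({1,…,d}). Let V be the set of v ∈ {1,…,d} such that the points σ(s)^{-1}(v), s ∈ F, are pairwise distinct, and suppose |V|/d ≥ 1 − η. Fix f ∈ {1,…,n}^F and for γ ∈ {1,…,n}^d set Q_{γ,f} = ⋂_{s∈F} σ(s)(γ^{-1}(f(s))). Then for every t > 2η, the κ^d-probability that |ζ(Q_{γ,f}) − Π_{s∈F} κ({f(s)})| > t is at most |F|²/(d(t−2η)²). -/

import Mathlib

open Finset

lemma marginal_aux {n d : ℕ} (p : Fin n → ℝ) (hsum : ∑ i, p i = 1)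
    {A : Type*} [Fintype A] (c : A → Fin d) (hc : Function.Injective c)
    (g : A → Fin n) :
    ∑ γ : Fin d → Fin n, (∏ k, p (γ k)) * ∏ a, (if γ (c a) = g a then (1:ℝ) else 0)
      = ∏ a, p (g a) := by
  classical
  set h : Fin d → Fin n → ℝ :=
    fun k i => p i * ∏ a, (if c a = k then (if i = g a then (1:ℝ) else 0) else 1) with hh
  have key : ∀ γ : Fin d → Fin n,
      (∏ k, p (γ k)) * ∏ a, (if γ (c a) = g a then (1:ℝ) else 0) = ∏ k, h k (γ k) := by
    intro γ
    simp only [hh, Finset.prod_mul_distrib]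
    congr 1
    rw [Finset.prod_comm]
    refine Finset.prod_congr rfl fun a _ => ?_
    rw [Finset.prod_ite_eq univ (c a) (fun k => if γ k = g a then (1:ℝ) else 0)]
    simp
  have step2 : ∑ γ : Fin d → Fin n, ∏ k, h k (γ k) = ∏ k, ∑ i, h k i := by
    rw [Finset.prod_univ_sum (fun _ => univ) h, Fintype.piFinset_univ]
  have hk1 : ∀ k, k ∉ Finset.univ.image c → ∑ i, h k i = 1 := by
    intro k hk
    have hca : ∀ a, c a ≠ k := by
      intro a hca
      exact hk (Finset.mem_image.2 ⟨a, Finset.mem_univ a, hca⟩)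
    simp [hh, hca, hsum]
  have hk2 : ∀ a₀, ∑ i, h (c a₀) i = p (g a₀) := by
    intro a₀
    have hi : ∀ i, h (c a₀) i = if i = g a₀ then p i else 0 := by
      intro i
      simp only [hh]
      have e1 : ∀ a, (if c a = c a₀ then (if i = g a then (1:ℝ) else 0) else 1)
          = (if a = a₀ then (if i = g a then (1:ℝ) else 0) else 1) := by
        intro a
        simp [hc.eq_iff]
      rw [Finset.prod_congr rfl (fun a _ => e1 a),
        Finset.prod_ite_eq' univ a₀ (fun a => if i = g a then (1:ℝ) else 0)]
      simp [mul_comm]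
    simp_rw [hi]
    rw [Finset.sum_ite_eq' univ (g a₀) p]
    simp
  calc ∑ γ : Fin d → Fin n, (∏ k, p (γ k)) * ∏ a, (if γ (c a) = g a then (1:ℝ) else 0)
      = ∑ γ : Fin d → Fin n, ∏ k, h k (γ k) := by simp_rw [key]
    _ = ∏ k, ∑ i, h k i := step2
    _ = ∏ k ∈ Finset.univ.image c, ∑ i, h k i := by
        exact (Finset.prod_subset (Finset.subset_univ _) (fun x _ hx => hk1 x hx)).symm
    _ = ∏ a, ∑ i, h (c a) i := Finset.prod_image (fun a _ b _ hab => hc hab)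
    _ = ∏ a, p (g a) := Finset.prod_congr rfl fun a _ => hk2 a

set_option maxHeartbeats 1000000 in
/-- Let `p` be a probability measure on `{1,…,n}`, `F` a (nonempty) finite
set, `d > 0`, `σ : F → Sym({1,…,d})`.  Let `V` be the set of `v` such that the points
`σ(s)⁻¹(v)`, `s ∈ F`, are pairwise distinct, and suppose `|V|/d ≥ 1 - η`.  Fix
`f ∈ {1,…,n}^F` and for `γ ∈ {1,…,n}^d` let
`Q_{γ,f} = ⋂_{s∈F} σ(s)(γ⁻¹(f s)) = {k : ∀ s, γ(σ(s)⁻¹ k) = f s}`.  Then for every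
`t > 2η` the `p^d`-probability that `|ζ(Q_{γ,f}) - ∏ s, p (f s)| > t` is at most
`|F|²/(d (t-2η)²)`. -/
theorem stmt17 {n d : ℕ} (hd : 0 < d) (p : Fin n → ℝ) (hp : ∀ i, 0 ≤ p i)
    (hsum : ∑ i, p i = 1)
    {F : Type*} [Fintype F] [Nonempty F] (σ : F → Equiv.Perm (Fin d))
    (η : ℝ)
    (hV : 1 - η ≤ ({v : Fin d | Function.Injective fun s : F => (σ s)⁻¹ v}.ncard : ℝ) / d)
    (f : F → Fin n) (t : ℝ) (ht : 2 * η < t) :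
    ∑ γ ∈ Finset.univ.filter (fun γ : Fin d → Fin n =>
        |({k : Fin d | ∀ s : F, γ ((σ s)⁻¹ k) = f s}.ncard : ℝ) / d - ∏ s, p (f s)| > t),
      ∏ k, p (γ k)
    ≤ (Fintype.card F : ℝ) ^ 2 / (d * (t - 2 * η) ^ 2) := by
  classical
  set w : (Fin d → Fin n) → ℝ := fun γ => ∏ k, p (γ k) with hw
  set q : ℝ := ∏ s, p (f s) with hq
  set Z : Fin d → (Fin d → Fin n) → ℝ :=
    fun v γ => ∏ s, (if γ ((σ s)⁻¹ v) = f s then (1:ℝ) else 0) with hZ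
  set V : Finset (Fin d) := univ.filter (fun v => Function.Injective fun s : F => (σ s)⁻¹ v)
    with hVdef
  set S : (Fin d → Fin n) → ℝ := fun γ => ∑ v ∈ V, Z v γ with hS
  set E : ℝ := V.card * q with hE
  set T : Fin d → Fin d → ℝ := fun v u => ∑ γ, w γ * (Z v γ * Z u γ) with hT
  have hd' : (0:ℝ) < d := by exact_mod_cast hd
  have hw0 : ∀ γ, 0 ≤ w γ := fun γ => Finset.prod_nonneg fun k _ => hp _
  have hwsum : ∑ γ, w γ = 1 := by
    have := Finset.prod_univ_sum (fun _ : Fin d => (univ : Finset (Fin n))) (fun _ i => p i)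
    rw [Fintype.piFinset_univ] at this
    simp only [hsum, Finset.prod_const_one] at this
    exact this.symm
  have hZ01 : ∀ v γ, Z v γ = if (∀ s : F, γ ((σ s)⁻¹ v) = f s) then (1:ℝ) else 0 := by
    intro v γ
    rw [hZ]
    simp only [Finset.prod_boole]
    simp
  have hZnn : ∀ v γ, 0 ≤ Z v γ := by
    intro v γ; rw [hZ01]; split <;> norm_num
  have hZle : ∀ v γ, Z v γ ≤ 1 := by
    intro v γ; rw [hZ01]; split <;> norm_num
  have hp1 : ∀ i, p i ≤ 1 := by
    intro i
    rw [← hsum]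
    exact Finset.single_le_sum (fun j _ => hp j) (Finset.mem_univ i)
  have hq0 : 0 ≤ q := Finset.prod_nonneg fun s _ => hp _
  have hq1 : q ≤ 1 := Finset.prod_le_one (fun s _ => hp _) (fun s _ => hp1 _)
  -- expectation of each Z
  have hEZ : ∀ v ∈ V, ∑ γ, w γ * Z v γ = q := by
    intro v hv
    have hinj : Function.Injective fun s : F => (σ s)⁻¹ v := (Finset.mem_filter.1 hv).2
    exact marginal_aux p hsum (fun s : F => (σ s)⁻¹ v) hinj f
  -- product expectations for "independent" pairs
  have hTeq : ∀ v ∈ V, ∀ u ∈ V, (∀ s t : F, (σ s)⁻¹ v ≠ (σ t)⁻¹ u) → T v u = q ^ 2 := by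
    intro v hv u hu hdis
    have hiv : Function.Injective fun s : F => (σ s)⁻¹ v := (Finset.mem_filter.1 hv).2
    have hiu : Function.Injective fun s : F => (σ s)⁻¹ u := (Finset.mem_filter.1 hu).2
    set c : F ⊕ F → Fin d := Sum.elim (fun s => (σ s)⁻¹ v) (fun s => (σ s)⁻¹ u) with hc
    have hcinj : Function.Injective c := by
      rintro (a | a) (b | b) hab
      · exact congrArg Sum.inl (hiv hab)
      · exact absurd hab (hdis a b)
      · exact absurd hab.symm (hdis b a)
      · exact congrArg Sum.inr (hiu hab)
    have := marginal_aux p hsum c hcinj (Sum.elim f f)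
    rw [Fintype.prod_sum_type] at this
    have key : ∀ γ : Fin d → Fin n,
        Z v γ * Z u γ = ∏ a : F ⊕ F, (if γ (c a) = Sum.elim f f a then (1:ℝ) else 0) := by
      intro γ
      rw [Fintype.prod_sum_type]
      simp [hZ, hc]
    rw [hT]
    simp only [key]
    rw [this]
    simp [hq, sq]
  have hTle : ∀ v u, T v u ≤ 1 := by
    intro v u
    rw [hT]
    calc ∑ γ, w γ * (Z v γ * Z u γ) ≤ ∑ γ, w γ * 1 := by
          refine Finset.sum_le_sum fun γ _ => ?_
          refine mul_le_mul_of_nonneg_left ?_ (hw0 γ)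
          calc Z v γ * Z u γ ≤ 1 * 1 :=
                mul_le_mul (hZle v γ) (hZle u γ) (hZnn u γ) zero_le_one
            _ = 1 := one_mul 1
      _ = 1 := by simp [hwsum]
  -- second-moment / variance bound
  have hsumwS : ∑ γ, w γ * S γ = E := by
    have : ∑ γ, w γ * S γ = ∑ v ∈ V, ∑ γ, w γ * Z v γ := by
      rw [Finset.sum_comm]
      refine Finset.sum_congr rfl fun γ _ => ?_
      rw [hS, Finset.mul_sum]
    rw [this, Finset.sum_congr rfl hEZ, Finset.sum_const, hE, nsmul_eq_mul]
  have hsumwS2 : ∑ γ, w γ * (S γ)^2 = ∑ v ∈ V, ∑ u ∈ V, T v u := by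
    have e1 : ∀ γ, w γ * (S γ)^2 = ∑ v ∈ V, ∑ u ∈ V, w γ * (Z v γ * Z u γ) := by
      intro γ
      rw [hS, sq, Finset.sum_mul_sum]
      rw [Finset.mul_sum]
      refine Finset.sum_congr rfl fun v _ => ?_
      rw [Finset.mul_sum]
    rw [Finset.sum_congr rfl (fun γ _ => e1 γ), Finset.sum_comm]
    refine Finset.sum_congr rfl fun v _ => Finset.sum_comm
  have hVar : ∑ γ, w γ * (S γ - E)^2 = ∑ v ∈ V, ∑ u ∈ V, (T v u - q^2) := by
    have expand : ∀ γ, w γ * (S γ - E)^2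
        = w γ * (S γ)^2 - 2 * E * (w γ * S γ) + E^2 * w γ := by
      intro γ; ring
    rw [Finset.sum_congr rfl (fun γ _ => expand γ), Finset.sum_add_distrib,
      Finset.sum_sub_distrib, ← Finset.mul_sum, ← Finset.mul_sum, hsumwS, hsumwS2,
      hwsum, mul_one]
    have : ∑ v ∈ V, ∑ u ∈ V, (T v u - q^2)
        = (∑ v ∈ V, ∑ u ∈ V, T v u) - ∑ v ∈ V, ∑ u ∈ V, (q^2) := by
      simp only [Finset.sum_sub_distrib]
    rw [this]
    simp only [Finset.sum_const, nsmul_eq_mul]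
    rw [hE]
    ring
  -- bad pairs
  set B : Finset (Fin d × Fin d) :=
    (univ : Finset (Fin d × F × F)).image (fun x => (x.1, σ x.2.2 ((σ x.2.1)⁻¹ x.1))) with hB
  have hBcard : (B.card : ℝ) ≤ d * (Fintype.card F)^2 := by
    have := Finset.card_image_le (s := (univ : Finset (Fin d × F × F)))
      (f := fun x => (x.1, σ x.2.2 ((σ x.2.1)⁻¹ x.1)))
    have hc : (univ : Finset (Fin d × F × F)).card = d * (Fintype.card F * Fintype.card F) := by
      simp [Finset.card_univ]
    rw [hc] at this
    calc (B.card : ℝ) ≤ (d * (Fintype.card F * Fintype.card F) : ℕ) := by exact_mod_cast this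
      _ = d * (Fintype.card F)^2 := by push_cast; ring
  have hVarle : ∑ γ, w γ * (S γ - E)^2 ≤ d * (Fintype.card F)^2 := by
    rw [hVar]
    have step : ∑ v ∈ V, ∑ u ∈ V, (T v u - q^2)
        ≤ ∑ v ∈ V, ∑ u ∈ V, (if (v, u) ∈ B then (1:ℝ) else 0) := by
      refine Finset.sum_le_sum fun v hv => Finset.sum_le_sum fun u hu => ?_
      by_cases hvu : (v, u) ∈ B
      · rw [if_pos hvu]
        have := hTle v u
        nlinarith [hq0]
      · rw [if_neg hvu]
        have hdis : ∀ s t : F, (σ s)⁻¹ v ≠ (σ t)⁻¹ u := by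
          intro s t hst
          apply hvu
          rw [hB]
          refine Finset.mem_image.2 ⟨(v, s, t), Finset.mem_univ _, ?_⟩
          show (v, (σ t) ((σ s)⁻¹ v)) = (v, u)
          rw [hst]; exact congrArg _ ((σ t).apply_symm_apply u)
        rw [hTeq v hv u hu hdis]
        simp
    refine step.trans ?_
    have huniv : ∑ v : Fin d, ∑ u : Fin d, (if (v, u) ∈ B then (1:ℝ) else 0) = B.card := by
      rw [← Finset.sum_product', Finset.univ_product_univ]
      rw [Finset.sum_boole]
      congr 1
      exact congrArg Finset.card (by ext x; simp)
    calc ∑ v ∈ V, ∑ u ∈ V, (if (v, u) ∈ B then (1:ℝ) else 0)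
        ≤ ∑ v ∈ V, ∑ u : Fin d, (if (v, u) ∈ B then (1:ℝ) else 0) := by
          refine Finset.sum_le_sum fun v _ => ?_
          refine Finset.sum_le_sum_of_subset_of_nonneg (Finset.subset_univ V) fun u _ _ => ?_
          positivity
      _ ≤ ∑ v : Fin d, ∑ u : Fin d, (if (v, u) ∈ B then (1:ℝ) else 0) := by
          refine Finset.sum_le_sum_of_subset_of_nonneg (Finset.subset_univ V) fun v _ _ => ?_
          positivity
      _ = B.card := huniv
      _ ≤ d * (Fintype.card F)^2 := hBcard
  -- facts about V, η
  have hVcard_le : (V.card : ℝ) ≤ d := by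
    have := Finset.card_le_card (Finset.subset_univ V)
    simp only [Finset.card_univ, Fintype.card_fin] at this
    exact_mod_cast this
  have hncardV : ({v : Fin d | Function.Injective fun s : F => (σ s)⁻¹ v}.ncard : ℝ)
      = V.card := by
    norm_cast
    rw [Set.ncard_eq_toFinset_card']
    simp [Set.toFinset_setOf, hVdef]
  have hVd2 : (d:ℝ) - V.card ≤ η * d := by
    rw [hncardV] at hV
    have := (le_div_iff₀ hd').1 hV
    nlinarith
  have hη : 0 ≤ η := by nlinarith
  set a : ℝ := d * (t - 2 * η) with haa
  have ha : 0 < a := mul_pos hd' (by linarith)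
  have ha2 : (0:ℝ) < a ^ 2 := by positivity
  have hηd : 0 ≤ η * d := mul_nonneg hη hd'.le
  have haval : a = t * d - 2 * (η * d) := by rw [haa]; ring
  -- event implies deviation
  have hevent : ∀ γ : Fin d → Fin n,
      t < |({k : Fin d | ∀ s : F, γ ((σ s)⁻¹ k) = f s}.ncard : ℝ) / d - q| →
      a ^ 2 ≤ (S γ - E) ^ 2 := by
    intro γ hγ
    set P : Fin d → Prop := fun k => ∀ s : F, γ ((σ s)⁻¹ k) = f s with hP
    have hQcard : ({k : Fin d | P k}.ncard : ℝ) = ((univ.filter P).card : ℝ) := by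
      norm_cast
      rw [Set.ncard_eq_toFinset_card']
      simp [Set.toFinset_setOf]
    set NQ : ℝ := ((univ.filter P).card : ℝ) with hNQ
    have hSγ : S γ = ((V.filter P).card : ℝ) := by
      rw [hS]
      simp only [hZ01]
      rw [Finset.sum_boole]
    have h1 : ((V.filter P).card : ℝ) ≤ NQ := by
      have := Finset.card_le_card (Finset.filter_subset_filter P (Finset.subset_univ V))
      rw [hNQ]
      exact_mod_cast this
    have h2 : NQ ≤ ((V.filter P).card : ℝ) + ((d:ℝ) - V.card) := by
      have hsub : univ.filter P ⊆ (V.filter P) ∪ (univ \ V) := by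
        intro x hx
        by_cases hxV : x ∈ V
        · exact Finset.mem_union_left _ (Finset.mem_filter.2 ⟨hxV, (Finset.mem_filter.1 hx).2⟩)
        · exact Finset.mem_union_right _ (Finset.mem_sdiff.2 ⟨Finset.mem_univ x, hxV⟩)
      have hVle : V.card ≤ d := by
        have := Finset.card_le_card (Finset.subset_univ V)
        simpa using this
      have hnat : (univ.filter P).card ≤ (V.filter P).card + (d - V.card) := by
        calc (univ.filter P).card ≤ ((V.filter P) ∪ (univ \ V)).card :=
              Finset.card_le_card hsub
          _ ≤ (V.filter P).card + (univ \ V).card := Finset.card_union_le _ _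
          _ = (V.filter P).card + (d - V.card) := by
              rw [Finset.card_sdiff_of_subset (Finset.subset_univ V)]
              simp
      have hc := (Nat.cast_le (α := ℝ)).2 hnat
      rw [hNQ]
      push_cast [Nat.cast_sub hVle] at hc
      linarith
    rw [hQcard] at hγ
    have hγ2 : t * d < |NQ - d * q| := by
      have hrw : (NQ / d - q) = (NQ - d * q) / d := by field_simp
      rw [hrw, abs_div, abs_of_pos hd'] at hγ
      exact (lt_div_iff₀ hd').1 hγ
    have hu2 : NQ - S γ ≤ η * d := by rw [hSγ]; linarith
    have hu1 : 0 ≤ NQ - S γ := by rw [hSγ]; linarith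
    have hr1 : (0:ℝ) ≤ d * q - E := by rw [hE]; nlinarith
    have hr2 : (d:ℝ) * q - E ≤ η * d := by rw [hE]; nlinarith
    have habs : a ≤ |S γ - E| := by
      rcases abs_cases (NQ - (d:ℝ) * q) with ⟨hx1, hx2⟩ | ⟨hx1, hx2⟩ <;>
        rw [hx1] at hγ2 <;>
        rcases abs_cases (S γ - E) with ⟨hy1, hy2⟩ | ⟨hy1, hy2⟩ <;>
        rw [hy1] <;> linarith
    calc a ^ 2 ≤ |S γ - E| ^ 2 := pow_le_pow_left₀ ha.le habs 2
      _ = (S γ - E) ^ 2 := sq_abs _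
  -- Chebyshev
  calc ∑ γ ∈ Finset.univ.filter (fun γ : Fin d → Fin n =>
        |({k : Fin d | ∀ s : F, γ ((σ s)⁻¹ k) = f s}.ncard : ℝ) / d - q| > t), w γ
      ≤ ∑ γ ∈ Finset.univ.filter (fun γ : Fin d → Fin n =>
        |({k : Fin d | ∀ s : F, γ ((σ s)⁻¹ k) = f s}.ncard : ℝ) / d - q| > t),
          w γ * ((S γ - E) ^ 2 / a ^ 2) := by
        refine Finset.sum_le_sum fun γ hγ => ?_
        have h := hevent γ (Finset.mem_filter.1 hγ).2
        nth_rewrite 1 [← mul_one (w γ)]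
        refine mul_le_mul_of_nonneg_left ?_ (hw0 γ)
        rw [le_div_iff₀ ha2]
        linarith
    _ ≤ ∑ γ, w γ * ((S γ - E) ^ 2 / a ^ 2) :=
        Finset.sum_le_sum_of_subset_of_nonneg (Finset.subset_univ _)
          (fun γ _ _ => mul_nonneg (hw0 γ) (by positivity))
    _ = (∑ γ, w γ * (S γ - E) ^ 2) / a ^ 2 := by
        rw [Finset.sum_div]
        exact Finset.sum_congr rfl fun γ _ => (mul_div_assoc _ _ _).symm
    _ ≤ (d * (Fintype.card F) ^ 2) / a ^ 2 := by gcongr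
    _ = (Fintype.card F : ℝ) ^ 2 / (d * (t - 2 * η) ^ 2) := by
        rw [haa]
        have hne : t - 2 * η ≠ 0 := ne_of_gt (by linarith)
        field_simp
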